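/- (Equation (4.5) of the paper: the nonvanishing commutator of the adapted polar frame.) For every function F : ℂ^{n−1} × ℂ → ℂ of class C² in the real sense, all α, β = 1, …, n−1 and all (w,ζ) ∈ ℂ^{n−1} × ℂ: e_α(e_β̄(F))(w,ζ) − e_β̄(e_α(F))(w,ζ) = g_{αβ̄}(w)·(ζ·∂F/∂ζ(w,ζ) − ζ̄·∂F/∂ζ̄(w,ζ)); that is, [e_α, e_β̄] = g_{αβ̄}·(Z − Z̄) as first-order differential operators. -/

import Mathlib

noncomputable section

/-- Wirtinger derivative `∂f/∂u(a)` of `f` at `a` along the complex direction `e`: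
`(1/2)(Df(a)[e] − i·Df(a)[i·e])`, with `Df` the real Fréchet derivative. -/
def wirt {E : Type*} [NormedAddCommGroup E] [NormedSpace ℂ E]
    (f : E → ℂ) (a e : E) : ℂ :=
  (1 / 2) * (fderiv ℝ f a e - Complex.I * fderiv ℝ f a (Complex.I • e))

/-- Conjugate Wirtinger derivative `∂f/∂ū(a)` of `f` at `a` along the complex direction `e`:
`(1/2)(Df(a)[e] + i·Df(a)[i·e])`. -/
def wirtBar {E : Type*} [NormedAddCommGroup E] [NormedSpace ℂ E]
    (f : E → ℂ) (a e : E) : ℂ :=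
  (1 / 2) * (fderiv ℝ f a e + Complex.I * fderiv ℝ f a (Complex.I • e))

/-- `N(w) = 1 + Σ_γ |w^γ|²`. -/
def Nfun {m : ℕ} (w : Fin m → ℂ) : ℝ := 1 + ∑ γ, Complex.normSq (w γ)

/-- `L(w) = log(ρ(w)²) + log N(w)`. -/
def Lfun {m : ℕ} (ρ : (Fin m → ℂ) → ℝ) (w : Fin m → ℂ) : ℝ :=
  Real.log (ρ w ^ 2) + Real.log (Nfun w)

/-- `g_{αβ̄}(w) = ∂²L/∂w^α∂w̄^β(w)`. -/
def gfun {m : ℕ} (ρ : (Fin m → ℂ) → ℝ) (α β : Fin m) (w : Fin m → ℂ) : ℂ :=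
  wirt (fun w' => wirtBar (fun w'' => ((Lfun ρ w'' : ℝ) : ℂ)) w' (Pi.single β 1))
    w (Pi.single α 1)

/-- The operator `Z(F) = ζ·∂F/∂ζ` on functions of `(w, ζ) ∈ ℂ^m × ℂ`. -/
def Zop {m : ℕ} (F : (Fin m → ℂ) × ℂ → ℂ) (p : (Fin m → ℂ) × ℂ) : ℂ :=
  p.2 * wirt F p (0, 1)

/-- The operator `Z̄(F) = ζ̄·∂F/∂ζ̄`. -/
def ZbarOp {m : ℕ} (F : (Fin m → ℂ) × ℂ → ℂ) (p : (Fin m → ℂ) × ℂ) : ℂ :=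
  (starRingEnd ℂ) p.2 * wirtBar F p (0, 1)

/-- The adapted polar frame operator
`e_α(F) = ∂F/∂w^α − (∂(log ρ²)/∂w^α)·ζ·∂F/∂ζ + (1/2)(∂(log N)/∂w^α)·(ζ̄·∂F/∂ζ̄ − ζ·∂F/∂ζ)`. -/
def eOp {m : ℕ} (ρ : (Fin m → ℂ) → ℝ) (α : Fin m)
    (F : (Fin m → ℂ) × ℂ → ℂ) (p : (Fin m → ℂ) × ℂ) : ℂ :=
  wirt F p (Pi.single α 1, 0)
    - wirt (fun w => ((Real.log (ρ w ^ 2) : ℝ) : ℂ)) p.1 (Pi.single α 1)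
        * (p.2 * wirt F p (0, 1))
    + (1 / 2) * wirt (fun w => ((Real.log (Nfun w) : ℝ) : ℂ)) p.1 (Pi.single α 1)
        * ((starRingEnd ℂ) p.2 * wirtBar F p (0, 1) - p.2 * wirt F p (0, 1))

/-- The adapted polar frame operator
`e_ᾱ(F) = ∂F/∂w̄^α − (∂(log ρ²)/∂w̄^α)·ζ̄·∂F/∂ζ̄ + (1/2)(∂(log N)/∂w̄^α)·(ζ·∂F/∂ζ − ζ̄·∂F/∂ζ̄)`. -/
def eBarOp {m : ℕ} (ρ : (Fin m → ℂ) → ℝ) (α : Fin m)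
    (F : (Fin m → ℂ) × ℂ → ℂ) (p : (Fin m → ℂ) × ℂ) : ℂ :=
  wirtBar F p (Pi.single α 1, 0)
    - wirtBar (fun w => ((Real.log (ρ w ^ 2) : ℝ) : ℂ)) p.1 (Pi.single α 1)
        * ((starRingEnd ℂ) p.2 * wirtBar F p (0, 1))
    + (1 / 2) * wirtBar (fun w => ((Real.log (Nfun w) : ℝ) : ℂ)) p.1 (Pi.single α 1)
        * (p.2 * wirt F p (0, 1) - (starRingEnd ℂ) p.2 * wirtBar F p (0, 1))


namespace WAux

section Basic
variable {E : Type*} [NormedAddCommGroup E] [NormedSpace ℂ E]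



lemma wirt_mul {f g : E → ℂ} {a : E} (hf : DifferentiableAt ℝ f a)
    (hg : DifferentiableAt ℝ g a) (e : E) :
    wirt (fun x => f x * g x) a e = wirt f a e * g a + f a * wirt g a e := by
  simp only [wirt, fderiv_fun_mul hf hg, ContinuousLinearMap.add_apply,
    ContinuousLinearMap.smul_apply, smul_eq_mul]; ring
lemma wirtBar_mul {f g : E → ℂ} {a : E} (hf : DifferentiableAt ℝ f a)
    (hg : DifferentiableAt ℝ g a) (e : E) :
    wirtBar (fun x => f x * g x) a e = wirtBar f a e * g a + f a * wirtBar g a e := by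
  simp only [wirtBar, fderiv_fun_mul hf hg, ContinuousLinearMap.add_apply,
    ContinuousLinearMap.smul_apply, smul_eq_mul]; ring
lemma wirt_sub {f g : E → ℂ} {a : E} (hf : DifferentiableAt ℝ f a)
    (hg : DifferentiableAt ℝ g a) (e : E) :
    wirt (fun x => f x - g x) a e = wirt f a e - wirt g a e := by
  simp only [wirt, fderiv_fun_sub hf hg, ContinuousLinearMap.sub_apply]; ring
lemma wirtBar_sub {f g : E → ℂ} {a : E} (hf : DifferentiableAt ℝ f a)
    (hg : DifferentiableAt ℝ g a) (e : E) :
    wirtBar (fun x => f x - g x) a e = wirtBar f a e - wirtBar g a e := by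
  simp only [wirtBar, fderiv_fun_sub hf hg, ContinuousLinearMap.sub_apply]; ring
lemma wirt_add {f g : E → ℂ} {a : E} (hf : DifferentiableAt ℝ f a)
    (hg : DifferentiableAt ℝ g a) (e : E) :
    wirt (fun x => f x + g x) a e = wirt f a e + wirt g a e := by
  simp only [wirt, fderiv_fun_add hf hg, ContinuousLinearMap.add_apply]; ring
lemma wirtBar_add {f g : E → ℂ} {a : E} (hf : DifferentiableAt ℝ f a)
    (hg : DifferentiableAt ℝ g a) (e : E) :
    wirtBar (fun x => f x + g x) a e = wirtBar f a e + wirtBar g a e := by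
  simp only [wirtBar, fderiv_fun_add hf hg, ContinuousLinearMap.add_apply]; ring
lemma wirt_const_mul {f : E → ℂ} {a : E} (hf : DifferentiableAt ℝ f a) (c : ℂ) (e : E) :
    wirt (fun x => c * f x) a e = c * wirt f a e := by
  simp only [wirt, fderiv_const_mul hf c, ContinuousLinearMap.smul_apply, smul_eq_mul]; ring
lemma wirtBar_const_mul {f : E → ℂ} {a : E} (hf : DifferentiableAt ℝ f a) (c : ℂ) (e : E) :
    wirtBar (fun x => c * f x) a e = c * wirtBar f a e := by
  simp only [wirtBar, fderiv_const_mul hf c, ContinuousLinearMap.smul_apply, smul_eq_mul]; ring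
lemma wirt_dir_zero (f : E → ℂ) (a : E) : wirt f a 0 = 0 := by simp [wirt]
lemma wirtBar_dir_zero (f : E → ℂ) (a : E) : wirtBar f a 0 = 0 := by simp [wirtBar]


end Basic

section Second
variable {E : Type*} [NormedAddCommGroup E] [NormedSpace ℂ E] {F : E → ℂ}



lemma diff_fderiv_apply (hF : ContDiff ℝ 2 F) (v : E) :
    Differentiable ℝ (fun q => fderiv ℝ F q v) := by
  have h1 : ContDiff ℝ 1 (fderiv ℝ F) := hF.fderiv_right (by norm_num)
  exact (h1.differentiable one_ne_zero).clm_apply (differentiable_const v)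

lemma diff_wirt (hF : ContDiff ℝ 2 F) (v : E) :
    Differentiable ℝ (fun q => wirt F q v) := by
  have := ((diff_fderiv_apply hF v).sub
    ((diff_fderiv_apply hF (Complex.I • v)).const_mul Complex.I)).const_mul (1/2 : ℂ)
  simpa [wirt] using this

lemma diff_wirtBar (hF : ContDiff ℝ 2 F) (v : E) :
    Differentiable ℝ (fun q => wirtBar F q v) := by
  have := ((diff_fderiv_apply hF v).add
    ((diff_fderiv_apply hF (Complex.I • v)).const_mul Complex.I)).const_mul (1/2 : ℂ)
  simpa [wirtBar] using this

lemma fderiv_fderiv_apply (hF : ContDiff ℝ 2 F) (p u v : E) :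
    fderiv ℝ (fun q => fderiv ℝ F q v) p u = fderiv ℝ (fderiv ℝ F) p u v := by
  have hd : DifferentiableAt ℝ (fderiv ℝ F) p :=
    ((hF.fderiv_right (m := 1) (by norm_num)).differentiable one_ne_zero) p
  rw [fderiv_clm_apply hd (differentiableAt_const v)]
  simp

lemma symm2 (hF : ContDiff ℝ 2 F) (p u v : E) :
    fderiv ℝ (fderiv ℝ F) p u v = fderiv ℝ (fderiv ℝ F) p v u :=
  (hF.contDiffAt.isSymmSndFDerivAt (by simp)) u v

lemma fderiv_wirt_apply (hF : ContDiff ℝ 2 F) (p u v : E) :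
    fderiv ℝ (fun q => wirt F q v) p u
      = (1/2) * (fderiv ℝ (fderiv ℝ F) p u v
          - Complex.I * fderiv ℝ (fderiv ℝ F) p u (Complex.I • v)) := by
  have e1 : (fun q => wirt F q v)
      = fun q => (1/2 : ℂ) * (fderiv ℝ F q v - Complex.I * fderiv ℝ F q (Complex.I • v)) := rfl
  rw [e1, fderiv_const_mul (((diff_fderiv_apply hF v) p).fun_sub
      (((diff_fderiv_apply hF (Complex.I • v)) p).const_mul Complex.I)),
    fderiv_fun_sub ((diff_fderiv_apply hF v) p)
      (((diff_fderiv_apply hF (Complex.I • v)) p).const_mul Complex.I),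
    fderiv_const_mul ((diff_fderiv_apply hF (Complex.I • v)) p)]
  simp [fderiv_fderiv_apply hF]

lemma fderiv_wirtBar_apply (hF : ContDiff ℝ 2 F) (p u v : E) :
    fderiv ℝ (fun q => wirtBar F q v) p u
      = (1/2) * (fderiv ℝ (fderiv ℝ F) p u v
          + Complex.I * fderiv ℝ (fderiv ℝ F) p u (Complex.I • v)) := by
  have e1 : (fun q => wirtBar F q v)
      = fun q => (1/2 : ℂ) * (fderiv ℝ F q v + Complex.I * fderiv ℝ F q (Complex.I • v)) := rfl
  rw [e1, fderiv_const_mul (((diff_fderiv_apply hF v) p).fun_add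
      (((diff_fderiv_apply hF (Complex.I • v)) p).const_mul Complex.I)),
    fderiv_fun_add ((diff_fderiv_apply hF v) p)
      (((diff_fderiv_apply hF (Complex.I • v)) p).const_mul Complex.I),
    fderiv_const_mul ((diff_fderiv_apply hF (Complex.I • v)) p)]
  simp [fderiv_fderiv_apply hF]; ring


lemma wirt_wirt_comm (hF : ContDiff ℝ 2 F) (p u v : E) :
    wirt (fun q => wirt F q v) p u = wirt (fun q => wirt F q u) p v := by
  have L : wirt (fun q => wirt F q v) p u = (1/2) * (fderiv ℝ (fun q => wirt F q v) p u
      - Complex.I * fderiv ℝ (fun q => wirt F q v) p (Complex.I • u)) := rfl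
  have R : wirt (fun q => wirt F q u) p v = (1/2) * (fderiv ℝ (fun q => wirt F q u) p v
      - Complex.I * fderiv ℝ (fun q => wirt F q u) p (Complex.I • v)) := rfl
  rw [L, R, fderiv_wirt_apply hF, fderiv_wirt_apply hF, fderiv_wirt_apply hF,
    fderiv_wirt_apply hF, symm2 hF p u v, symm2 hF p u (Complex.I • v),
    symm2 hF p (Complex.I • u) v, symm2 hF p (Complex.I • u) (Complex.I • v)]
  ring

lemma wirt_wirtBar_comm (hF : ContDiff ℝ 2 F) (p u v : E) :
    wirt (fun q => wirtBar F q v) p u = wirtBar (fun q => wirt F q u) p v := by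
  have L : wirt (fun q => wirtBar F q v) p u = (1/2) * (fderiv ℝ (fun q => wirtBar F q v) p u
      - Complex.I * fderiv ℝ (fun q => wirtBar F q v) p (Complex.I • u)) := rfl
  have R : wirtBar (fun q => wirt F q u) p v = (1/2) * (fderiv ℝ (fun q => wirt F q u) p v
      + Complex.I * fderiv ℝ (fun q => wirt F q u) p (Complex.I • v)) := rfl
  rw [L, R, fderiv_wirtBar_apply hF, fderiv_wirtBar_apply hF, fderiv_wirt_apply hF,
    fderiv_wirt_apply hF, symm2 hF p u v, symm2 hF p u (Complex.I • v),
    symm2 hF p (Complex.I • u) v, symm2 hF p (Complex.I • u) (Complex.I • v)]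
  ring

lemma wirtBar_wirtBar_comm (hF : ContDiff ℝ 2 F) (p u v : E) :
    wirtBar (fun q => wirtBar F q v) p u = wirtBar (fun q => wirtBar F q u) p v := by
  have L : wirtBar (fun q => wirtBar F q v) p u = (1/2) * (fderiv ℝ (fun q => wirtBar F q v) p u
      + Complex.I * fderiv ℝ (fun q => wirtBar F q v) p (Complex.I • u)) := rfl
  have R : wirtBar (fun q => wirtBar F q u) p v = (1/2) * (fderiv ℝ (fun q => wirtBar F q u) p v
      + Complex.I * fderiv ℝ (fun q => wirtBar F q u) p (Complex.I • v)) := rfl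
  rw [L, R, fderiv_wirtBar_apply hF, fderiv_wirtBar_apply hF, fderiv_wirtBar_apply hF,
    fderiv_wirtBar_apply hF, symm2 hF p u v, symm2 hF p u (Complex.I • v),
    symm2 hF p (Complex.I • u) v, symm2 hF p (Complex.I • u) (Complex.I • v)]
  ring

end Second

section Prod
variable {E₁ : Type*} [NormedAddCommGroup E₁] [NormedSpace ℂ E₁]


lemma wirt_comp_fst (h : E₁ → ℂ) (p : E₁ × ℂ) (hh : DifferentiableAt ℝ h p.1) (d : E₁ × ℂ) :
    wirt (fun q : E₁ × ℂ => h q.1) p d = wirt h p.1 d.1 := by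
  have hf : fderiv ℝ (fun q : E₁ × ℂ => h q.1) p
      = (fderiv ℝ h p.1).comp (ContinuousLinearMap.fst ℝ E₁ ℂ) :=
    (hh.hasFDerivAt.comp p hasFDerivAt_fst).fderiv
  simp [wirt, hf]
lemma wirtBar_comp_fst (h : E₁ → ℂ) (p : E₁ × ℂ) (hh : DifferentiableAt ℝ h p.1) (d : E₁ × ℂ) :
    wirtBar (fun q : E₁ × ℂ => h q.1) p d = wirtBar h p.1 d.1 := by
  have hf : fderiv ℝ (fun q : E₁ × ℂ => h q.1) p
      = (fderiv ℝ h p.1).comp (ContinuousLinearMap.fst ℝ E₁ ℂ) :=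
    (hh.hasFDerivAt.comp p hasFDerivAt_fst).fderiv
  simp [wirtBar, hf]
lemma wirt_snd (p d : E₁ × ℂ) : wirt (fun q : E₁ × ℂ => q.2) p d = d.2 := by
  have hf : fderiv ℝ (fun q : E₁ × ℂ => q.2) p = ContinuousLinearMap.snd ℝ E₁ ℂ :=
    hasFDerivAt_snd.fderiv
  simp [wirt, hf]
  linear_combination (-(2⁻¹ : ℂ) * d.2) * Complex.I_sq
lemma wirtBar_snd (p d : E₁ × ℂ) : wirtBar (fun q : E₁ × ℂ => q.2) p d = 0 := by
  have hf : fderiv ℝ (fun q : E₁ × ℂ => q.2) p = ContinuousLinearMap.snd ℝ E₁ ℂ :=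
    hasFDerivAt_snd.fderiv
  simp [wirtBar, hf]
  linear_combination ((d.2 : ℂ)) * Complex.I_sq
lemma wirt_conj_snd (p d : E₁ × ℂ) :
    wirt (fun q : E₁ × ℂ => (starRingEnd ℂ) q.2) p d = 0 := by
  have hf : fderiv ℝ (fun q : E₁ × ℂ => (starRingEnd ℂ) q.2) p
      = (Complex.conjCLE.toContinuousLinearMap).comp (ContinuousLinearMap.snd ℝ E₁ ℂ) :=
    ((Complex.conjCLE.toContinuousLinearMap).hasFDerivAt.comp p hasFDerivAt_snd).fderiv
  simp [wirt, hf]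
  linear_combination ((starRingEnd ℂ) d.2) * Complex.I_sq
lemma wirtBar_conj_snd (p d : E₁ × ℂ) :
    wirtBar (fun q : E₁ × ℂ => (starRingEnd ℂ) q.2) p d = (starRingEnd ℂ) d.2 := by
  have hf : fderiv ℝ (fun q : E₁ × ℂ => (starRingEnd ℂ) q.2) p
      = (Complex.conjCLE.toContinuousLinearMap).comp (ContinuousLinearMap.snd ℝ E₁ ℂ) :=
    ((Complex.conjCLE.toContinuousLinearMap).hasFDerivAt.comp p hasFDerivAt_snd).fderiv
  simp [wirtBar, hf]
  linear_combination (-(2⁻¹:ℂ) * (starRingEnd ℂ) d.2) * Complex.I_sq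

lemma diff_comp_fst {h : E₁ → ℂ} (hh : Differentiable ℝ h) :
    Differentiable ℝ (fun q : E₁ × ℂ => h q.1) := hh.comp differentiable_fst
lemma diff_snd : Differentiable ℝ (fun q : E₁ × ℂ => q.2) := differentiable_snd
lemma diff_conj_snd : Differentiable ℝ (fun q : E₁ × ℂ => (starRingEnd ℂ) q.2) :=
  (Complex.conjCLE.toContinuousLinearMap.differentiable).comp differentiable_snd

/-- wirt of `h(w)·(ζ·K)` -/
lemma M1w (h : E₁ → ℂ) (K : E₁ × ℂ → ℂ) (hh : Differentiable ℝ h)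
    (hK : Differentiable ℝ K) (p d : E₁ × ℂ) :
    wirt (fun q : E₁ × ℂ => h q.1 * (q.2 * K q)) p d
      = wirt h p.1 d.1 * (p.2 * K p) + h p.1 * (d.2 * K p + p.2 * wirt K p d) := by
  rw [wirt_mul ((diff_comp_fst hh) p) ((diff_snd.fun_mul hK) p),
    wirt_mul (diff_snd p) (hK p), wirt_comp_fst h p (hh p.1), wirt_snd]
lemma M1b (h : E₁ → ℂ) (K : E₁ × ℂ → ℂ) (hh : Differentiable ℝ h)
    (hK : Differentiable ℝ K) (p d : E₁ × ℂ) :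
    wirtBar (fun q : E₁ × ℂ => h q.1 * (q.2 * K q)) p d
      = wirtBar h p.1 d.1 * (p.2 * K p) + h p.1 * (p.2 * wirtBar K p d) := by
  rw [wirtBar_mul ((diff_comp_fst hh) p) ((diff_snd.fun_mul hK) p),
    wirtBar_mul (diff_snd p) (hK p), wirtBar_comp_fst h p (hh p.1), wirtBar_snd]
  ring
lemma M2w (h : E₁ → ℂ) (K : E₁ × ℂ → ℂ) (hh : Differentiable ℝ h)
    (hK : Differentiable ℝ K) (p d : E₁ × ℂ) :
    wirt (fun q : E₁ × ℂ => h q.1 * ((starRingEnd ℂ) q.2 * K q)) p d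
      = wirt h p.1 d.1 * ((starRingEnd ℂ) p.2 * K p)
        + h p.1 * ((starRingEnd ℂ) p.2 * wirt K p d) := by
  rw [wirt_mul ((diff_comp_fst hh) p) ((diff_conj_snd.fun_mul hK) p),
    wirt_mul (diff_conj_snd p) (hK p), wirt_comp_fst h p (hh p.1), wirt_conj_snd]
  ring
lemma M2b (h : E₁ → ℂ) (K : E₁ × ℂ → ℂ) (hh : Differentiable ℝ h)
    (hK : Differentiable ℝ K) (p d : E₁ × ℂ) :
    wirtBar (fun q : E₁ × ℂ => h q.1 * ((starRingEnd ℂ) q.2 * K q)) p d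
      = wirtBar h p.1 d.1 * ((starRingEnd ℂ) p.2 * K p)
        + h p.1 * ((starRingEnd ℂ) d.2 * K p + (starRingEnd ℂ) p.2 * wirtBar K p d) := by
  rw [wirtBar_mul ((diff_comp_fst hh) p) ((diff_conj_snd.fun_mul hK) p),
    wirtBar_mul (diff_conj_snd p) (hK p), wirtBar_comp_fst h p (hh p.1), wirtBar_conj_snd]
/-- wirt of `(1/2)·h(w)·(ζ·K1 − ζ̄·K2)` -/
lemma C1w (h : E₁ → ℂ) (K1 K2 : E₁ × ℂ → ℂ) (hh : Differentiable ℝ h)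
    (hK1 : Differentiable ℝ K1) (hK2 : Differentiable ℝ K2) (p d : E₁ × ℂ) :
    wirt (fun q : E₁ × ℂ => 1/2 * h q.1 * (q.2 * K1 q - (starRingEnd ℂ) q.2 * K2 q)) p d
      = 1/2 * wirt h p.1 d.1 * (p.2 * K1 p - (starRingEnd ℂ) p.2 * K2 p)
        + 1/2 * h p.1 * (d.2 * K1 p + p.2 * wirt K1 p d
            - (starRingEnd ℂ) p.2 * wirt K2 p d) := by
  rw [wirt_mul (((diff_comp_fst hh).const_mul _) p)
      (((diff_snd.fun_mul hK1).fun_sub (diff_conj_snd.fun_mul hK2)) p),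
    wirt_const_mul ((diff_comp_fst hh) p), wirt_comp_fst h p (hh p.1),
    wirt_sub ((diff_snd.fun_mul hK1) p) ((diff_conj_snd.fun_mul hK2) p),
    wirt_mul (diff_snd p) (hK1 p), wirt_mul (diff_conj_snd p) (hK2 p), wirt_snd, wirt_conj_snd]
  ring
lemma C1b (h : E₁ → ℂ) (K1 K2 : E₁ × ℂ → ℂ) (hh : Differentiable ℝ h)
    (hK1 : Differentiable ℝ K1) (hK2 : Differentiable ℝ K2) (p d : E₁ × ℂ) :
    wirtBar (fun q : E₁ × ℂ => 1/2 * h q.1 * (q.2 * K1 q - (starRingEnd ℂ) q.2 * K2 q)) p d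
      = 1/2 * wirtBar h p.1 d.1 * (p.2 * K1 p - (starRingEnd ℂ) p.2 * K2 p)
        + 1/2 * h p.1 * (p.2 * wirtBar K1 p d
            - ((starRingEnd ℂ) d.2 * K2 p + (starRingEnd ℂ) p.2 * wirtBar K2 p d)) := by
  rw [wirtBar_mul (((diff_comp_fst hh).const_mul _) p)
      (((diff_snd.fun_mul hK1).fun_sub (diff_conj_snd.fun_mul hK2)) p),
    wirtBar_const_mul ((diff_comp_fst hh) p), wirtBar_comp_fst h p (hh p.1),
    wirtBar_sub ((diff_snd.fun_mul hK1) p) ((diff_conj_snd.fun_mul hK2) p),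
    wirtBar_mul (diff_snd p) (hK1 p), wirtBar_mul (diff_conj_snd p) (hK2 p),
    wirtBar_snd, wirtBar_conj_snd]
  ring
/-- wirt of `(1/2)·h(w)·(ζ̄·K2 − ζ·K1)` -/
lemma C2w (h : E₁ → ℂ) (K1 K2 : E₁ × ℂ → ℂ) (hh : Differentiable ℝ h)
    (hK1 : Differentiable ℝ K1) (hK2 : Differentiable ℝ K2) (p d : E₁ × ℂ) :
    wirt (fun q : E₁ × ℂ => 1/2 * h q.1 * ((starRingEnd ℂ) q.2 * K2 q - q.2 * K1 q)) p d
      = 1/2 * wirt h p.1 d.1 * ((starRingEnd ℂ) p.2 * K2 p - p.2 * K1 p)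
        + 1/2 * h p.1 * ((starRingEnd ℂ) p.2 * wirt K2 p d
            - (d.2 * K1 p + p.2 * wirt K1 p d)) := by
  rw [wirt_mul (((diff_comp_fst hh).const_mul _) p)
      (((diff_conj_snd.fun_mul hK2).fun_sub (diff_snd.fun_mul hK1)) p),
    wirt_const_mul ((diff_comp_fst hh) p), wirt_comp_fst h p (hh p.1),
    wirt_sub ((diff_conj_snd.fun_mul hK2) p) ((diff_snd.fun_mul hK1) p),
    wirt_mul (diff_snd p) (hK1 p), wirt_mul (diff_conj_snd p) (hK2 p), wirt_snd, wirt_conj_snd]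
  ring
lemma C2b (h : E₁ → ℂ) (K1 K2 : E₁ × ℂ → ℂ) (hh : Differentiable ℝ h)
    (hK1 : Differentiable ℝ K1) (hK2 : Differentiable ℝ K2) (p d : E₁ × ℂ) :
    wirtBar (fun q : E₁ × ℂ => 1/2 * h q.1 * ((starRingEnd ℂ) q.2 * K2 q - q.2 * K1 q)) p d
      = 1/2 * wirtBar h p.1 d.1 * ((starRingEnd ℂ) p.2 * K2 p - p.2 * K1 p)
        + 1/2 * h p.1 * (((starRingEnd ℂ) d.2 * K2 p + (starRingEnd ℂ) p.2 * wirtBar K2 p d)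
            - p.2 * wirtBar K1 p d) := by
  rw [wirtBar_mul (((diff_comp_fst hh).const_mul _) p)
      (((diff_conj_snd.fun_mul hK2).fun_sub (diff_snd.fun_mul hK1)) p),
    wirtBar_const_mul ((diff_comp_fst hh) p), wirtBar_comp_fst h p (hh p.1),
    wirtBar_sub ((diff_conj_snd.fun_mul hK2) p) ((diff_snd.fun_mul hK1) p),
    wirtBar_mul (diff_snd p) (hK1 p), wirtBar_mul (diff_conj_snd p) (hK2 p),
    wirtBar_snd, wirtBar_conj_snd]
  ring


theorem main_general (P Q : E₁ → ℂ) (hP : ContDiff ℝ 2 P) (hQ : ContDiff ℝ 2 Q)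
    (F : E₁ × ℂ → ℂ) (hF : ContDiff ℝ 2 F) (a b w : E₁) (ζ : ℂ)
    (G H : E₁ × ℂ → ℂ)
    (hG : G = fun q => wirtBar F q (b, 0)
        - wirtBar P q.1 b * ((starRingEnd ℂ) q.2 * wirtBar F q (0, 1))
        + 1/2 * wirtBar Q q.1 b
            * (q.2 * wirt F q (0, 1) - (starRingEnd ℂ) q.2 * wirtBar F q (0, 1)))
    (hH : H = fun q => wirt F q (a, 0)
        - wirt P q.1 a * (q.2 * wirt F q (0, 1))
        + 1/2 * wirt Q q.1 a
            * ((starRingEnd ℂ) q.2 * wirtBar F q (0, 1) - q.2 * wirt F q (0, 1))) :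
    (wirt G (w, ζ) (a, 0) - wirt P w a * (ζ * wirt G (w, ζ) (0, 1))
        + 1/2 * wirt Q w a
            * ((starRingEnd ℂ) ζ * wirtBar G (w, ζ) (0, 1) - ζ * wirt G (w, ζ) (0, 1)))
      - (wirtBar H (w, ζ) (b, 0)
        - wirtBar P w b * ((starRingEnd ℂ) ζ * wirtBar H (w, ζ) (0, 1))
        + 1/2 * wirtBar Q w b
            * (ζ * wirt H (w, ζ) (0, 1) - (starRingEnd ℂ) ζ * wirtBar H (w, ζ) (0, 1)))
    = wirt (fun w' => wirtBar (fun w'' => P w'' + Q w'') w' b) w a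
        * (ζ * wirt F (w, ζ) (0, 1) - (starRingEnd ℂ) ζ * wirtBar F (w, ζ) (0, 1)) := by
  have hPd : Differentiable ℝ P := hP.differentiable two_ne_zero
  have hQd : Differentiable ℝ Q := hQ.differentiable two_ne_zero
  have dPA : Differentiable ℝ (fun w' => wirt P w' a) := diff_wirt hP a
  have dPB : Differentiable ℝ (fun w' => wirtBar P w' b) := diff_wirtBar hP b
  have dQA : Differentiable ℝ (fun w' => wirt Q w' a) := diff_wirt hQ a
  have dQB : Differentiable ℝ (fun w' => wirtBar Q w' b) := diff_wirtBar hQ b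
  have dK1 : Differentiable ℝ (fun q : E₁ × ℂ => wirt F q (0, 1)) := diff_wirt hF _
  have dK2 : Differentiable ℝ (fun q : E₁ × ℂ => wirtBar F q (0, 1)) := diff_wirtBar hF _
  have dFb : Differentiable ℝ (fun q : E₁ × ℂ => wirtBar F q (b, 0)) := diff_wirtBar hF _
  have dFa : Differentiable ℝ (fun q : E₁ × ℂ => wirt F q (a, 0)) := diff_wirt hF _
  have dT1 : Differentiable ℝ
      (fun q : E₁ × ℂ => wirtBar P q.1 b * ((starRingEnd ℂ) q.2 * wirtBar F q (0, 1))) :=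
    (diff_comp_fst dPB).fun_mul (diff_conj_snd.fun_mul dK2)
  have dC1 : Differentiable ℝ (fun q : E₁ × ℂ => 1/2 * wirtBar Q q.1 b
      * (q.2 * wirt F q (0, 1) - (starRingEnd ℂ) q.2 * wirtBar F q (0, 1))) :=
    ((diff_comp_fst dQB).const_mul _).fun_mul ((diff_snd.fun_mul dK1).fun_sub (diff_conj_snd.fun_mul dK2))
  have dS1 : Differentiable ℝ
      (fun q : E₁ × ℂ => wirt P q.1 a * (q.2 * wirt F q (0, 1))) :=
    (diff_comp_fst dPA).fun_mul (diff_snd.fun_mul dK1)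
  have dC2 : Differentiable ℝ (fun q : E₁ × ℂ => 1/2 * wirt Q q.1 a
      * ((starRingEnd ℂ) q.2 * wirtBar F q (0, 1) - q.2 * wirt F q (0, 1))) :=
    ((diff_comp_fst dQA).const_mul _).fun_mul ((diff_conj_snd.fun_mul dK2).fun_sub (diff_snd.fun_mul dK1))
  subst hG hH
  have wGd : ∀ d : E₁ × ℂ, wirt (fun q : E₁ × ℂ => wirtBar F q (b, 0)
        - wirtBar P q.1 b * ((starRingEnd ℂ) q.2 * wirtBar F q (0, 1))
        + 1/2 * wirtBar Q q.1 b
            * (q.2 * wirt F q (0, 1) - (starRingEnd ℂ) q.2 * wirtBar F q (0, 1))) (w, ζ) d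
      = wirt (fun q : E₁ × ℂ => wirtBar F q (b, 0)) (w, ζ) d
        - (wirt (fun w' => wirtBar P w' b) w d.1
              * ((starRingEnd ℂ) ζ * wirtBar F (w, ζ) (0, 1))
            + wirtBar P w b
              * ((starRingEnd ℂ) ζ * wirt (fun q => wirtBar F q (0, 1)) (w, ζ) d))
        + (1/2 * wirt (fun w' => wirtBar Q w' b) w d.1
              * (ζ * wirt F (w, ζ) (0, 1) - (starRingEnd ℂ) ζ * wirtBar F (w, ζ) (0, 1))
            + 1/2 * wirtBar Q w b
              * (d.2 * wirt F (w, ζ) (0, 1) + ζ * wirt (fun q => wirt F q (0, 1)) (w, ζ) d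
                  - (starRingEnd ℂ) ζ * wirt (fun q => wirtBar F q (0, 1)) (w, ζ) d)) := by
    intro d
    rw [wirt_add ((dFb.fun_sub dT1) (w, ζ)) (dC1 (w, ζ)) d,
      wirt_sub (dFb (w, ζ)) (dT1 (w, ζ)) d,
      M2w _ _ dPB dK2, C1w _ _ _ dQB dK1 dK2]
  have wbGd : ∀ d : E₁ × ℂ, wirtBar (fun q : E₁ × ℂ => wirtBar F q (b, 0)
        - wirtBar P q.1 b * ((starRingEnd ℂ) q.2 * wirtBar F q (0, 1))
        + 1/2 * wirtBar Q q.1 b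
            * (q.2 * wirt F q (0, 1) - (starRingEnd ℂ) q.2 * wirtBar F q (0, 1))) (w, ζ) d
      = wirtBar (fun q : E₁ × ℂ => wirtBar F q (b, 0)) (w, ζ) d
        - (wirtBar (fun w' => wirtBar P w' b) w d.1
              * ((starRingEnd ℂ) ζ * wirtBar F (w, ζ) (0, 1))
            + wirtBar P w b
              * ((starRingEnd ℂ) d.2 * wirtBar F (w, ζ) (0, 1)
                  + (starRingEnd ℂ) ζ * wirtBar (fun q => wirtBar F q (0, 1)) (w, ζ) d))
        + (1/2 * wirtBar (fun w' => wirtBar Q w' b) w d.1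
              * (ζ * wirt F (w, ζ) (0, 1) - (starRingEnd ℂ) ζ * wirtBar F (w, ζ) (0, 1))
            + 1/2 * wirtBar Q w b
              * (ζ * wirtBar (fun q => wirt F q (0, 1)) (w, ζ) d
                  - ((starRingEnd ℂ) d.2 * wirtBar F (w, ζ) (0, 1)
                      + (starRingEnd ℂ) ζ * wirtBar (fun q => wirtBar F q (0, 1)) (w, ζ) d))) := by
    intro d
    rw [wirtBar_add ((dFb.fun_sub dT1) (w, ζ)) (dC1 (w, ζ)) d,
      wirtBar_sub (dFb (w, ζ)) (dT1 (w, ζ)) d,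
      M2b _ _ dPB dK2, C1b _ _ _ dQB dK1 dK2]
  have wHd : ∀ d : E₁ × ℂ, wirt (fun q : E₁ × ℂ => wirt F q (a, 0)
        - wirt P q.1 a * (q.2 * wirt F q (0, 1))
        + 1/2 * wirt Q q.1 a
            * ((starRingEnd ℂ) q.2 * wirtBar F q (0, 1) - q.2 * wirt F q (0, 1))) (w, ζ) d
      = wirt (fun q : E₁ × ℂ => wirt F q (a, 0)) (w, ζ) d
        - (wirt (fun w' => wirt P w' a) w d.1 * (ζ * wirt F (w, ζ) (0, 1))
            + wirt P w a
              * (d.2 * wirt F (w, ζ) (0, 1) + ζ * wirt (fun q => wirt F q (0, 1)) (w, ζ) d))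
        + (1/2 * wirt (fun w' => wirt Q w' a) w d.1
              * ((starRingEnd ℂ) ζ * wirtBar F (w, ζ) (0, 1) - ζ * wirt F (w, ζ) (0, 1))
            + 1/2 * wirt Q w a
              * ((starRingEnd ℂ) ζ * wirt (fun q => wirtBar F q (0, 1)) (w, ζ) d
                  - (d.2 * wirt F (w, ζ) (0, 1)
                      + ζ * wirt (fun q => wirt F q (0, 1)) (w, ζ) d))) := by
    intro d
    rw [wirt_add ((dFa.fun_sub dS1) (w, ζ)) (dC2 (w, ζ)) d,
      wirt_sub (dFa (w, ζ)) (dS1 (w, ζ)) d,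
      M1w _ _ dPA dK1, C2w _ _ _ dQA dK1 dK2]
  have wbHd : ∀ d : E₁ × ℂ, wirtBar (fun q : E₁ × ℂ => wirt F q (a, 0)
        - wirt P q.1 a * (q.2 * wirt F q (0, 1))
        + 1/2 * wirt Q q.1 a
            * ((starRingEnd ℂ) q.2 * wirtBar F q (0, 1) - q.2 * wirt F q (0, 1))) (w, ζ) d
      = wirtBar (fun q : E₁ × ℂ => wirt F q (a, 0)) (w, ζ) d
        - (wirtBar (fun w' => wirt P w' a) w d.1 * (ζ * wirt F (w, ζ) (0, 1))
            + wirt P w a * (ζ * wirtBar (fun q => wirt F q (0, 1)) (w, ζ) d))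
        + (1/2 * wirtBar (fun w' => wirt Q w' a) w d.1
              * ((starRingEnd ℂ) ζ * wirtBar F (w, ζ) (0, 1) - ζ * wirt F (w, ζ) (0, 1))
            + 1/2 * wirt Q w a
              * (((starRingEnd ℂ) d.2 * wirtBar F (w, ζ) (0, 1)
                    + (starRingEnd ℂ) ζ * wirtBar (fun q => wirtBar F q (0, 1)) (w, ζ) d)
                  - ζ * wirtBar (fun q => wirt F q (0, 1)) (w, ζ) d)) := by
    intro d
    rw [wirtBar_add ((dFa.fun_sub dS1) (w, ζ)) (dC2 (w, ζ)) d,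
      wirtBar_sub (dFa (w, ζ)) (dS1 (w, ζ)) d,
      M1b _ _ dPA dK1, C2b _ _ _ dQA dK1 dK2]
  have hsum : (fun w' => wirtBar (fun w'' => P w'' + Q w'') w' b)
      = fun w' => wirtBar P w' b + wirtBar Q w' b :=
    funext fun w' => wirtBar_add (hPd w') (hQd w') b
  have s1 := wirt_wirtBar_comm hF ((w, ζ) : E₁ × ℂ) (a, 0) (b, 0)
  have s2 := wirt_wirtBar_comm hF ((w, ζ) : E₁ × ℂ) (a, 0) (0, 1)
  have s3 := wirt_wirtBar_comm hF ((w, ζ) : E₁ × ℂ) (0, 1) (b, 0)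
  have s4 := wirt_wirtBar_comm hF ((w, ζ) : E₁ × ℂ) (0, 1) (0, 1)
  have s5 := wirt_wirt_comm hF ((w, ζ) : E₁ × ℂ) (a, 0) (0, 1)
  have s6 := wirtBar_wirtBar_comm hF ((w, ζ) : E₁ × ℂ) (0, 1) (b, 0)
  have sP := wirt_wirtBar_comm hP w a b
  have sQ := wirt_wirtBar_comm hQ w a b
  rw [wGd (a, 0), wGd ((0 : E₁), (1 : ℂ)), wbGd ((0 : E₁), (1 : ℂ)),
    wbHd (b, 0), wHd ((0 : E₁), (1 : ℂ)), wbHd ((0 : E₁), (1 : ℂ)),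
    hsum, wirt_add (dPB w) (dQB w) a]
  dsimp only
  rw [s1, s2, s3, s4, s5, s6, sP, sQ]
  simp only [wirt_dir_zero, wirtBar_dir_zero, map_zero, map_one]
  ring

end Prod

end WAux

open WAux in
/-- **Equation (4.5): the nonvanishing commutator of the adapted polar frame.** For any `C²`
function `F : ℂ^m × ℂ → ℂ` and all `α, β`:
`e_α(e_β̄(F)) − e_β̄(e_α(F)) = g_{αβ̄}·(Z(F) − Z̄(F))`, i.e. `[e_α, e_β̄] = g_{αβ̄}(Z − Z̄)`.
Here `ℂ^{n−1} = ℂ^m` with `m = n − 1 ≥ 1`. -/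
theorem statement12 (m : ℕ) (hm : 1 ≤ m) (ρ : (Fin m → ℂ) → ℝ)
    (hρpos : ∀ w, 0 < ρ w) (hρ : ContDiff ℝ 2 ρ)
    (F : (Fin m → ℂ) × ℂ → ℂ) (hF : ContDiff ℝ 2 F) :
    ∀ (α β : Fin m) (w : Fin m → ℂ) (ζ : ℂ),
      eOp ρ α (eBarOp ρ β F) (w, ζ) - eBarOp ρ β (eOp ρ α F) (w, ζ)
        = gfun ρ α β w * (ζ * wirt F (w, ζ) (0, 1)
            - (starRingEnd ℂ) ζ * wirtBar F (w, ζ) (0, 1)) := by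
  intro α β w ζ
  have hwγ : ∀ γ : Fin m, ContDiff ℝ 2 (fun w : Fin m → ℂ => w γ) := fun γ =>
    contDiff_pi.mp contDiff_id γ
  have hN : ContDiff ℝ 2 (Nfun (m := m)) := by
    have hsq : ∀ γ : Fin m, ContDiff ℝ 2 (fun w : Fin m → ℂ => Complex.normSq (w γ)) := by
      intro γ
      have : ContDiff ℝ 2 (fun w : Fin m → ℂ => (w γ).re * (w γ).re + (w γ).im * (w γ).im) :=
        ((Complex.reCLM.contDiff.comp (hwγ γ)).mul (Complex.reCLM.contDiff.comp (hwγ γ))).add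
          ((Complex.imCLM.contDiff.comp (hwγ γ)).mul (Complex.imCLM.contDiff.comp (hwγ γ)))
      have heq : (fun w : Fin m → ℂ => Complex.normSq (w γ))
          = fun w : Fin m → ℂ => (w γ).re * (w γ).re + (w γ).im * (w γ).im :=
        funext fun w => Complex.normSq_apply _
      rw [heq]; exact this
    have : ContDiff ℝ 2 (fun w : Fin m → ℂ => 1 + ∑ γ, Complex.normSq (w γ)) :=
      contDiff_const.add (ContDiff.sum fun γ _ => hsq γ)
    exact this
  have hNpos : ∀ x : Fin m → ℂ, Nfun x ≠ 0 := by
    intro x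
    have h1 : (0:ℝ) ≤ ∑ γ, Complex.normSq (x γ) :=
      Finset.sum_nonneg fun γ _ => Complex.normSq_nonneg _
    have : (0:ℝ) < Nfun x := by unfold Nfun; linarith
    exact this.ne'
  have hPl : ContDiff ℝ 2 (fun w' : Fin m → ℂ => ((Real.log (ρ w' ^ 2) : ℝ) : ℂ)) := by
    have h1 : ContDiff ℝ 2 (fun w' : Fin m → ℂ => Real.log (ρ w' ^ 2)) :=
      (hρ.pow 2).log fun x => (pow_pos (hρpos x) 2).ne'
    exact Complex.ofRealCLM.contDiff.comp h1
  have hQl : ContDiff ℝ 2 (fun w' : Fin m → ℂ => ((Real.log (Nfun w') : ℝ) : ℂ)) := by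
    have h1 : ContDiff ℝ 2 (fun w' : Fin m → ℂ => Real.log (Nfun w')) := hN.log hNpos
    exact Complex.ofRealCLM.contDiff.comp h1
  have key := main_general (fun w' : Fin m → ℂ => ((Real.log (ρ w' ^ 2) : ℝ) : ℂ))
    (fun w' : Fin m → ℂ => ((Real.log (Nfun w') : ℝ) : ℂ)) hPl hQl F hF
    (Pi.single α 1) (Pi.single β 1) w ζ (eBarOp ρ β F) (eOp ρ α F) rfl rfl
  have hg : gfun ρ α β w
      = wirt (fun w' => wirtBar (fun w'' => ((Real.log (ρ w'' ^ 2) : ℝ) : ℂ)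
          + ((Real.log (Nfun w'') : ℝ) : ℂ)) w' (Pi.single β 1)) w (Pi.single α 1) := by
    have hfun : (fun w'' : Fin m → ℂ => ((Lfun ρ w'' : ℝ) : ℂ))
        = fun w'' : Fin m → ℂ => ((Real.log (ρ w'' ^ 2) : ℝ) : ℂ)
            + ((Real.log (Nfun w'') : ℝ) : ℂ) := by
      funext x; simp [Lfun, Complex.ofReal_add]
    rw [show gfun ρ α β w = wirt (fun w' => wirtBar
        (fun w'' : Fin m → ℂ => ((Lfun ρ w'' : ℝ) : ℂ)) w' (Pi.single β 1)) w
        (Pi.single α 1) from rfl, hfun]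
  rw [hg]
  exact key

end
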